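/- Let A be a nonempty discrete almost periodic set in ℝ^p of finite type. Then there exists ε > 0 such that every (ε/2)-almost period τ of A lies within distance ε/2 of an exact period of A: there exists T ∈ ℝ^p with A + T = A and |T − τ| < ε/2. Consequently, the set of periods {T ∈ ℝ^p : A + T = A} is relatively dense in ℝ^p. -/

import Mathlib

open Pointwise

noncomputable section

/-- A set `S ⊆ ℝ^p` is relatively dense if there is `R` such that every ball of
radius `R` contains a point of `S`. -/
def RelativelyDense {p : ℕ} (S : Set (EuclideanSpace ℝ (Fin p))) : Prop :=
  ∃ R : ℝ, ∀ x : EuclideanSpace ℝ (Fin p), ∃ s ∈ S, dist x s ≤ R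

/-- A set `A ⊆ ℝ^p` is discrete: closed with finite intersection with every compact set. -/
def DiscreteSet {p : ℕ} (A : Set (EuclideanSpace ℝ (Fin p))) : Prop :=
  IsClosed A ∧ ∀ K : Set (EuclideanSpace ℝ (Fin p)), IsCompact K → (A ∩ K).Finite

/-- `τ` is an `ε`-almost period of `A`: there is a bijection `σ : A → A` with
`|a + τ - σ a| < ε` for all `a ∈ A`. -/
def IsAlmostPeriodOf {p : ℕ} (A : Set (EuclideanSpace ℝ (Fin p))) (ε : ℝ)
    (τ : EuclideanSpace ℝ (Fin p)) : Prop :=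
  ∃ σ : A ≃ A, ∀ a : A,
    ‖(a : EuclideanSpace ℝ (Fin p)) + τ - (σ a : EuclideanSpace ℝ (Fin p))‖ < ε

/-- `A` is an almost periodic set: for every `ε > 0` its set of `ε`-almost periods is
relatively dense. -/
def AlmostPeriodicSet {p : ℕ} (A : Set (EuclideanSpace ℝ (Fin p))) : Prop :=
  ∀ ε : ℝ, 0 < ε → RelativelyDense {τ | IsAlmostPeriodOf A ε τ}

/-- `L` is a full rank lattice: the set of integer linear combinations of `p` linearly
independent vectors of `ℝ^p`. -/
def IsFullRankLattice {p : ℕ} (L : Set (EuclideanSpace ℝ (Fin p))) : Prop :=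
  ∃ T : Fin p → EuclideanSpace ℝ (Fin p), LinearIndependent ℝ T ∧
    L = {x | ∃ n : Fin p → ℤ, x = ∑ i, (n i : ℝ) • T i}

/-- `T` is a period of `A`: `A + T = A`. -/
def IsPeriodOf {p : ℕ} (A : Set (EuclideanSpace ℝ (Fin p)))
    (T : EuclideanSpace ℝ (Fin p)) : Prop :=
  (fun x => x + T) '' A = A

/-- For a nonempty discrete almost periodic set of finite type, there is `ε > 0` such
that every `ε/2`-almost period lies within `ε/2` of an exact period; consequently the
set of periods is relatively dense. -/
theorem almostPeriods_near_exact_periods {p : ℕ}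
    (A : Set (EuclideanSpace ℝ (Fin p))) (hne : A.Nonempty)
    (hdisc : DiscreteSet A) (hap : AlmostPeriodicSet A)
    (hft : DiscreteSet (A - A)) :
    (∃ ε : ℝ, 0 < ε ∧ ∀ τ : EuclideanSpace ℝ (Fin p), IsAlmostPeriodOf A (ε / 2) τ →
      ∃ T : EuclideanSpace ℝ (Fin p), IsPeriodOf A T ∧ ‖T - τ‖ < ε / 2) ∧
    RelativelyDense {T | IsPeriodOf A T} := by
  
  classical
  obtain ⟨a₀, ha₀⟩ := hne
  -- Step A: A is relatively dense with radius R₁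
  obtain ⟨R, hR⟩ := hap 1 one_pos
  set R₁ : ℝ := max R 0 + 1 with hR₁def
  have hR₁one : 1 ≤ R₁ := by
    have : (0:ℝ) ≤ max R 0 := le_max_right _ _
    linarith
  have hdense : ∀ x : EuclideanSpace ℝ (Fin p), ∃ a ∈ A, dist x a ≤ R₁ := by
    intro x
    obtain ⟨τ, hτ, hdist⟩ := hR (x - a₀)
    obtain ⟨σ, hσ⟩ := hτ
    refine ⟨σ ⟨a₀, ha₀⟩, (σ ⟨a₀, ha₀⟩).2, ?_⟩
    have h1 : dist x (a₀ + τ) ≤ max R 0 := by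
      rw [dist_eq_norm]
      have he : x - (a₀ + τ) = (x - a₀) - τ := by abel
      rw [he, ← dist_eq_norm]
      exact le_trans hdist (le_max_left _ _)
    have h2 : dist (a₀ + τ) ((σ ⟨a₀, ha₀⟩ : EuclideanSpace ℝ (Fin p))) < 1 := by
      rw [dist_eq_norm]; exact hσ ⟨a₀, ha₀⟩
    calc dist x ((σ ⟨a₀, ha₀⟩ : EuclideanSpace ℝ (Fin p)))
        ≤ dist x (a₀ + τ) + dist (a₀ + τ) ((σ ⟨a₀, ha₀⟩ : EuclideanSpace ℝ (Fin p))) :=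
          dist_triangle _ _ _
      _ ≤ max R 0 + 1 := by linarith
  -- Step B: the finite set F
  have hFfin : ((A - A) ∩ Metric.closedBall (0 : EuclideanSpace ℝ (Fin p)) (2*R₁+2)).Finite :=
    hft.2 _ (isCompact_closedBall _ _)
  set F := (A - A) ∩ Metric.closedBall (0 : EuclideanSpace ℝ (Fin p)) (2*R₁+2) with hFdef
  -- Step C: the separation ε
  obtain ⟨ε, hεpos, hε1, hεsep⟩ :
      ∃ ε : ℝ, 0 < ε ∧ ε ≤ 1 ∧ ∀ u ∈ F, ∀ v ∈ F, dist u v < ε → u = v := by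
    set s : Finset ℝ := ((hFfin.toFinset ×ˢ hFfin.toFinset).filter
        fun q => q.1 ≠ q.2).image (fun q => dist q.1 q.2) with hs
    have hmem : ∀ u ∈ F, ∀ v ∈ F, u ≠ v → dist u v ∈ s := by
      intro u hu v hv hne2
      simp only [hs, Finset.mem_image, Finset.mem_filter, Finset.mem_product,
        Set.Finite.mem_toFinset]
      exact ⟨(u, v), ⟨⟨hu, hv⟩, hne2⟩, rfl⟩
    by_cases hsn : s.Nonempty
    · refine ⟨min 1 (s.min' hsn), ?_, min_le_left _ _, ?_⟩
      · apply lt_min one_pos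
        have hm := s.min'_mem hsn
        simp only [hs, Finset.mem_image, Finset.mem_filter, Finset.mem_product,
          Set.Finite.mem_toFinset] at hm
        obtain ⟨⟨u, v⟩, ⟨_, hne2⟩, heq⟩ := hm
        rw [← heq]; exact dist_pos.mpr hne2
      · intro u hu v hv hlt
        by_contra hne2
        have h1 := s.min'_le _ (hmem u hu v hv hne2)
        have h2 := min_le_right 1 (s.min' hsn)
        linarith
    · refine ⟨1, one_pos, le_refl _, fun u hu v hv hlt => ?_⟩
      by_contra hne2
      exact hsn ⟨_, hmem u hu v hv hne2⟩
  -- Step D: the key claim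
  have key : ∀ τ : EuclideanSpace ℝ (Fin p), IsAlmostPeriodOf A (ε / 2) τ →
      ∃ T : EuclideanSpace ℝ (Fin p), IsPeriodOf A T ∧ ‖T - τ‖ < ε / 2 := by
    rintro τ ⟨σ, hσ⟩
    set t : A → EuclideanSpace ℝ (Fin p) := fun a => (σ a : EuclideanSpace ℝ (Fin p)) - a with ht
    have h1 : ∀ a : A, ‖t a - τ‖ < ε / 2 := by
      intro a
      have he : t a - τ = -((a : EuclideanSpace ℝ (Fin p)) + τ - σ a) := by
        simp only [ht]; abel
      rw [he, norm_neg]; exact hσ a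
    have h2 : ∀ a b : A, ‖t a - t b‖ < ε := by
      intro a b
      have h3 := dist_triangle_right (t a) (t b) τ
      rw [dist_eq_norm, dist_eq_norm, dist_eq_norm] at h3
      have := h1 a; have := h1 b
      linarith
    -- one step: nearby points have equal t
    have onestep : ∀ a b : A, ‖(a : EuclideanSpace ℝ (Fin p)) - b‖ ≤ 2*R₁+1 → t a = t b := by
      intro a b hab
      have hu : (a : EuclideanSpace ℝ (Fin p)) - b ∈ F := by
        refine ⟨Set.sub_mem_sub a.2 b.2, ?_⟩
        rw [Metric.mem_closedBall, dist_zero_right]; linarith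
      have heq : (σ a : EuclideanSpace ℝ (Fin p)) - σ b
          = ((a : EuclideanSpace ℝ (Fin p)) - b) + (t a - t b) := by
        simp only [ht]; abel
      have hv : (σ a : EuclideanSpace ℝ (Fin p)) - σ b ∈ F := by
        refine ⟨Set.sub_mem_sub (σ a).2 (σ b).2, ?_⟩
        rw [Metric.mem_closedBall, dist_zero_right]
        have h4 : ‖(σ a : EuclideanSpace ℝ (Fin p)) - σ b‖
            ≤ ‖(a : EuclideanSpace ℝ (Fin p)) - b‖ + ‖t a - t b‖ := by
          rw [heq]; exact norm_add_le _ _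
        have h5 := (h2 a b).le
        linarith
      have hd : dist ((a : EuclideanSpace ℝ (Fin p)) - b)
          ((σ a : EuclideanSpace ℝ (Fin p)) - σ b) < ε := by
        rw [dist_eq_norm]
        have he2 : ((a : EuclideanSpace ℝ (Fin p)) - b)
            - ((σ a : EuclideanSpace ℝ (Fin p)) - σ b) = -(t a - t b) := by
          simp only [ht]; abel
        rw [he2, norm_neg]; exact h2 a b
      have heq2 := hεsep _ hu _ hv hd
      have h6 : t a - t b = 0 := by
        have h7 : t a - t b = ((σ a : EuclideanSpace ℝ (Fin p)) - σ b)
            - ((a : EuclideanSpace ℝ (Fin p)) - b) := by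
          simp only [ht]; abel
        rw [← heq2, sub_self] at h7
        exact h7
      exact sub_eq_zero.mp h6
    -- chain induction
    have chain : ∀ n : ℕ, ∀ a b : A, ‖(b : EuclideanSpace ℝ (Fin p)) - a‖ ≤ n → t a = t b := by
      intro n
      induction n with
      | zero =>
        intro a b h
        have h0 : ‖(b : EuclideanSpace ℝ (Fin p)) - a‖ = 0 :=
          le_antisymm (by simpa using h) (norm_nonneg _)
        rw [norm_sub_eq_zero_iff] at h0
        rw [Subtype.ext h0.symm]
      | succ n ih =>
        intro a b h
        by_cases hsmall : ‖(a : EuclideanSpace ℝ (Fin p)) - b‖ ≤ 2*R₁+1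
        · exact onestep a b hsmall
        · push_neg at hsmall
          set d := ‖(b : EuclideanSpace ℝ (Fin p)) - (a : EuclideanSpace ℝ (Fin p))‖ with hd
          have hd' : ‖(a : EuclideanSpace ℝ (Fin p)) - b‖ = d := by rw [hd, norm_sub_rev]
          have hdbig : 2*R₁+1 < d := by rw [← hd']; exact hsmall
          have hdpos : 0 < d := by linarith
          set u := (b : EuclideanSpace ℝ (Fin p)) - (a : EuclideanSpace ℝ (Fin p)) with hudef
          set x := (a : EuclideanSpace ℝ (Fin p)) + ((d - (R₁+1))/d) • u with hx
          obtain ⟨c, hcA, hcx⟩ := hdense x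
          have hxa : ‖x - a‖ = d - (R₁+1) := by
            have he3 : x - (a : EuclideanSpace ℝ (Fin p)) = ((d - (R₁+1))/d) • u := by
              rw [hx]; abel
            rw [he3, norm_smul, Real.norm_eq_abs,
              abs_of_nonneg (div_nonneg (by linarith) hdpos.le)]
            rw [← hd, div_mul_cancel₀ _ (ne_of_gt hdpos)]
          have hxb : ‖x - b‖ = R₁ + 1 := by
            have he4 : x - (b : EuclideanSpace ℝ (Fin p)) = ((d - (R₁+1))/d) • u - u := by
              rw [hx, hudef]; abel
            have he5 : ((d - (R₁+1))/d) • u - u = ((d - (R₁+1))/d - 1) • u := by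
              rw [sub_smul, one_smul]
            have he6 : (d - (R₁+1))/d - 1 = -((R₁+1)/d) := by
              field_simp; ring
            rw [he4, he5, he6, norm_smul, Real.norm_eq_abs, abs_neg,
              abs_of_nonneg (div_nonneg (by linarith) hdpos.le)]
            rw [← hd, div_mul_cancel₀ _ (ne_of_gt hdpos)]
          have hcb : t (⟨c, hcA⟩ : A) = t b := by
            apply onestep
            -- ‖c - b‖ ≤ 2R₁+1
            have h8 : ‖(c : EuclideanSpace ℝ (Fin p)) - b‖ ≤ ‖c - x‖ + ‖x - b‖ := by
              have := dist_triangle (c : EuclideanSpace ℝ (Fin p)) x b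
              rw [dist_eq_norm, dist_eq_norm, dist_eq_norm] at this
              exact this
            have h9 : ‖(c : EuclideanSpace ℝ (Fin p)) - x‖ ≤ R₁ := by
              rw [← dist_eq_norm, dist_comm]; exact hcx
            rw [hxb] at h8
            linarith
          have hca : t a = t (⟨c, hcA⟩ : A) := by
            apply ih
            have h8 : ‖(c : EuclideanSpace ℝ (Fin p)) - a‖ ≤ ‖c - x‖ + ‖x - a‖ := by
              have := dist_triangle (c : EuclideanSpace ℝ (Fin p)) x a
              rw [dist_eq_norm, dist_eq_norm, dist_eq_norm] at this
              exact this
            have h9 : ‖(c : EuclideanSpace ℝ (Fin p)) - x‖ ≤ R₁ := by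
              rw [← dist_eq_norm, dist_comm]; exact hcx
            have hdn : d ≤ (n : ℝ) + 1 := by
              rw [hd, hudef] at h ⊢
              push_cast at h
              linarith [h]
            rw [hxa] at h8
            push_cast
            linarith
          rw [hca, hcb]
    -- t is constant
    have tconst : ∀ a : A, t ⟨a₀, ha₀⟩ = t a := by
      intro a
      exact chain ⌈‖(a : EuclideanSpace ℝ (Fin p)) - a₀‖⌉₊ ⟨a₀, ha₀⟩ a (Nat.le_ceil _)
    refine ⟨t ⟨a₀, ha₀⟩, ?_, h1 ⟨a₀, ha₀⟩⟩
    -- IsPeriodOf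
    unfold IsPeriodOf
    ext y
    simp only [Set.mem_image]
    constructor
    · rintro ⟨a, ha, rfl⟩
      have h10 : a + t ⟨a₀, ha₀⟩ = (σ ⟨a, ha⟩ : EuclideanSpace ℝ (Fin p)) := by
        rw [tconst ⟨a, ha⟩]
        simp only [ht]
        abel
      rw [h10]
      exact (σ ⟨a, ha⟩).2
    · intro hy
      refine ⟨(σ.symm ⟨y, hy⟩ : EuclideanSpace ℝ (Fin p)), (σ.symm ⟨y, hy⟩).2, ?_⟩
      rw [tconst (σ.symm ⟨y, hy⟩)]
      simp only [ht]
      rw [Equiv.apply_symm_apply]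
      abel
  refine ⟨⟨ε, hεpos, key⟩, ?_⟩
  obtain ⟨R₂, hR₂⟩ := hap (ε / 2) (by linarith)
  refine ⟨R₂ + ε / 2, fun x => ?_⟩
  obtain ⟨τ, hτ, hdx⟩ := hR₂ x
  obtain ⟨T, hT, hTτ⟩ := key τ hτ
  refine ⟨T, hT, ?_⟩
  have h11 : dist τ T < ε / 2 := by
    rw [dist_eq_norm, norm_sub_rev]; exact hTτ
  calc dist x T ≤ dist x τ + dist τ T := dist_triangle _ _ _
    _ ≤ R₂ + ε / 2 := by linarith
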